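/- Let 1 < p ≤ q and let A be an n×n matrix with all entries in [1/N, 1]. Let z ∈ ℝ^n have strictly positive entries with ‖z‖_q = 1, ‖Az‖_p = 1, and suppose z is a critical point of f, i.e., Σ_k (A_k z)^{p-1} a_{ki} = z_i^{q-1} for every i. Then the Hessian of f at z is negative semidefinite: for every direction ε ∈ ℝ^n, the second derivative of t ↦ f(z + tε) at t = 0 is at most 0. -/

import Mathlib

open Filter

lemma sumP_hasDerivAt {n : ℕ} (r : ℝ) (x v : Fin n → ℝ) (t : ℝ)
    (h : ∀ i, 0 < x i + t * v i) :
    HasDerivAt (fun s => ∑ i, (x i + s * v i) ^ r)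
      (∑ i, v i * r * (x i + t * v i) ^ (r - 1)) t := by
  apply HasDerivAt.fun_sum
  intro i _
  have h1 : HasDerivAt (fun s : ℝ => x i + s * v i) (v i) t := by
    simpa using ((hasDerivAt_id t).mul_const (v i)).const_add (x i)
  exact h1.rpow_const (Or.inl (h i).ne')

lemma sumP1_hasDerivAt {n : ℕ} (r : ℝ) (x v : Fin n → ℝ) (t : ℝ)
    (h : ∀ i, 0 < x i + t * v i) :
    HasDerivAt (fun s => ∑ i, v i * r * (x i + s * v i) ^ (r - 1))
      (∑ i, v i * r * (v i * (r - 1) * (x i + t * v i) ^ (r - 1 - 1))) t := by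
  apply HasDerivAt.fun_sum
  intro i _
  have h1 : HasDerivAt (fun s : ℝ => x i + s * v i) (v i) t := by
    simpa using ((hasDerivAt_id t).mul_const (v i)).const_add (x i)
  exact (h1.rpow_const (Or.inl (h i).ne')).const_mul (v i * r)

lemma aux_main {P Q P₁ Q₁ : ℝ → ℝ} {p q dP dQ dP2 dQ2 : ℝ}
    (hPpos : ∀ᶠ t in nhds (0:ℝ), 0 < P t) (hQpos : ∀ᶠ t in nhds (0:ℝ), 0 < Q t)
    (hPd : ∀ᶠ t in nhds (0:ℝ), HasDerivAt P (P₁ t) t)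
    (hQd : ∀ᶠ t in nhds (0:ℝ), HasDerivAt Q (Q₁ t) t)
    (hP0 : P 0 = 1) (hQ0 : Q 0 = 1) (hP10 : P₁ 0 = dP) (hQ10 : Q₁ 0 = dQ)
    (hP1d : HasDerivAt P₁ dP2 0) (hQ1d : HasDerivAt Q₁ dQ2 0) :
    deriv (deriv (fun t => P t ^ (1/p) * Q t ^ (-(1/q)))) 0
      = dP2 * (1/p) + dP^2 * (1/p) * (1/p - 1) - 2 * dP * dQ * (1/p) * (1/q)
        - dQ2 * (1/q) + dQ^2 * (1/q) * (1/q + 1) := by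
  set g₁ : ℝ → ℝ := fun t =>
    P₁ t * (1/p) * P t ^ (1/p - 1) * Q t ^ (-(1/q))
      + P t ^ (1/p) * (Q₁ t * (-(1/q)) * Q t ^ (-(1/q) - 1)) with hg₁
  have hgd : ∀ᶠ t in nhds (0:ℝ),
      HasDerivAt (fun s => P s ^ (1/p) * Q s ^ (-(1/q))) (g₁ t) t := by
    filter_upwards [hPpos, hQpos, hPd, hQd] with t h1 h2 h3 h4
    exact (h3.rpow_const (Or.inl h1.ne')).mul (h4.rpow_const (Or.inl h2.ne'))
  have e2 : deriv (fun s => P s ^ (1/p) * Q s ^ (-(1/q))) =ᶠ[nhds (0:ℝ)] g₁ :=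
    hgd.mono fun t h => h.deriv
  rw [e2.deriv_eq]
  have hP : HasDerivAt P (P₁ 0) 0 := hPd.self_of_nhds
  have hQ : HasDerivAt Q (Q₁ 0) 0 := hQd.self_of_nhds
  have hP0t : (0:ℝ) < P 0 := hPpos.self_of_nhds
  have hQ0t : (0:ℝ) < Q 0 := hQpos.self_of_nhds
  have T1 := ((hP1d.mul_const (1/p)).mul
      (hP.rpow_const (p := 1/p - 1) (Or.inl hP0t.ne'))).mul
      (hQ.rpow_const (p := -(1/q)) (Or.inl hQ0t.ne'))
  have T2 := (hP.rpow_const (p := 1/p) (Or.inl hP0t.ne')).mul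
      ((hQ1d.mul_const (-(1/q))).mul (hQ.rpow_const (p := -(1/q) - 1) (Or.inl hQ0t.ne')))
  have Tall := T1.add T2
  rw [show deriv g₁ 0 = _ from Tall.deriv]
  simp only [Pi.mul_apply]
  rw [hP0, hQ0, hP10, hQ10]
  simp only [Real.one_rpow]
  ring

/-- The `ℓ_p` norm of a vector in `ℝ^n` for a real exponent `p`. -/
noncomputable def pnorm {n : ℕ} (p : ℝ) (x : Fin n → ℝ) : ℝ :=
  (∑ i, |x i| ^ p) ^ (1 / p)

theorem stmt9 (n : ℕ) (hn : 1 ≤ n) (p q N : ℝ) (hp : 1 < p) (hpq : p ≤ q) (hN : 1 ≤ N)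
    (A : Matrix (Fin n) (Fin n) ℝ) (hA : ∀ i j, A i j ∈ Set.Icc (1 / N) 1)
    (z : Fin n → ℝ) (hz : ∀ i, 0 < z i)
    (hzq : pnorm q z = 1) (hAz : pnorm p (A.mulVec z) = 1)
    (hcrit : ∀ i, ∑ k, (A.mulVec z k) ^ (p - 1) * A k i = z i ^ (q - 1))
    (ε : Fin n → ℝ) :
    iteratedDeriv 2
      (fun t : ℝ => pnorm p (A.mulVec (z + t • ε)) / pnorm q (z + t • ε)) 0 ≤ 0 := by
  have hq : 1 < q := lt_of_lt_of_le hp hpq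
  have hp0 : (0:ℝ) < p := by linarith
  have hq0 : (0:ℝ) < q := by linarith
  set y : Fin n → ℝ := A.mulVec z with hy_def
  set w : Fin n → ℝ := A.mulVec ε with hw_def
  have hne : (Finset.univ : Finset (Fin n)).Nonempty := ⟨⟨0, hn⟩, Finset.mem_univ _⟩
  have hApos : ∀ i j, 0 < A i j := fun i j =>
    lt_of_lt_of_le (div_pos one_pos (by linarith)) (hA i j).1
  have hy : ∀ k, 0 < y k := by
    intro k
    rw [hy_def]
    simp only [Matrix.mulVec, dotProduct]
    exact Finset.sum_pos (fun i _ => mul_pos (hApos k i) (hz i)) hne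
  have rpow_eq_one : ∀ S r : ℝ, 0 < S → 0 < r → S ^ (1/r) = 1 → S = 1 := by
    intro S r hS hr h
    have h2 : (S ^ (1/r)) ^ r = 1 ^ r := by rw [h]
    rwa [← Real.rpow_mul hS.le, one_div, inv_mul_cancel₀ hr.ne', Real.rpow_one,
      Real.one_rpow] at h2
  have hPsum : ∑ k, y k ^ p = 1 := by
    apply rpow_eq_one _ p (Finset.sum_pos (fun k _ => Real.rpow_pos_of_pos (hy k) p) hne) hp0
    have e : ∀ k : Fin n, |y k| = y k := fun k => abs_of_pos (hy k)
    simpa [pnorm, e] using hAz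
  have hQsum : ∑ i, z i ^ q = 1 := by
    apply rpow_eq_one _ q (Finset.sum_pos (fun i _ => Real.rpow_pos_of_pos (hz i) q) hne) hq0
    have e : ∀ i : Fin n, |z i| = z i := fun i => abs_of_pos (hz i)
    simpa [pnorm, e] using hzq
  set c : ℝ := ∑ i, z i ^ (q-1) * ε i with hc_def
  set BF : ℝ := ∑ k, y k ^ (p-2) * w k ^ 2 with hBF_def
  set BG : ℝ := ∑ i, z i ^ (q-2) * ε i ^ 2 with hBG_def
  have hac : ∑ k, y k ^ (p-1) * w k = c := by
    have e : ∀ k, y k ^ (p-1) * w k = ∑ i, (y k ^ (p-1) * A k i) * ε i := by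
      intro k
      rw [hw_def]
      simp only [Matrix.mulVec, dotProduct, Finset.mul_sum]
      exact Finset.sum_congr rfl fun i _ => by ring
    rw [Finset.sum_congr rfl fun k _ => e k, Finset.sum_comm, hc_def]
    exact Finset.sum_congr rfl fun i _ => by rw [← Finset.sum_mul, hcrit i]
  -- Cauchy-Schwarz 1 : c² ≤ BG
  have hcsq : c ^ 2 ≤ BG := by
    have key := Finset.sum_mul_sq_le_sq_mul_sq Finset.univ
      (fun i => z i ^ (q/2)) (fun i => z i ^ (q/2 - 1) * ε i)
    have e1 : ∀ i : Fin n, z i ^ (q/2) * (z i ^ (q/2-1) * ε i) = z i ^ (q-1) * ε i := by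
      intro i
      rw [← mul_assoc, ← Real.rpow_add (hz i), show q/2 + (q/2-1) = q - 1 by ring]
    have e2 : ∀ i : Fin n, (z i ^ (q/2)) ^ 2 = z i ^ q := by
      intro i
      rw [sq, ← Real.rpow_add (hz i), show q/2 + q/2 = q by ring]
    have e3 : ∀ i : Fin n, (z i ^ (q/2-1) * ε i) ^ 2 = z i ^ (q-2) * ε i ^ 2 := by
      intro i
      rw [mul_pow, sq (z i ^ (q/2-1)), ← Real.rpow_add (hz i),
        show q/2-1 + (q/2-1) = q-2 by ring]
    simp only [e1, e2, e3] at key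
    rw [hQsum, one_mul] at key
    exact key
  -- Cauchy-Schwarz 2 : BF ≤ BG
  have hBF : BF ≤ BG := by
    have step1 : ∀ k, w k ^ 2 ≤ y k * ∑ i, A k i * (ε i ^ 2 / z i) := by
      intro k
      have key := Finset.sum_mul_sq_le_sq_mul_sq Finset.univ
        (fun i => Real.sqrt (A k i * z i)) (fun i => Real.sqrt (A k i / z i) * ε i)
      have e1 : ∀ i : Fin n,
          Real.sqrt (A k i * z i) * (Real.sqrt (A k i / z i) * ε i) = A k i * ε i := by
        intro i
        rw [← mul_assoc, ← Real.sqrt_mul (mul_pos (hApos k i) (hz i)).le,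
          show A k i * z i * (A k i / z i) = (A k i)^2 by
            field_simp [(hz i).ne'],
          Real.sqrt_sq (hApos k i).le]
      have e2 : ∀ i : Fin n, Real.sqrt (A k i * z i) ^ 2 = A k i * z i :=
        fun i => Real.sq_sqrt (mul_pos (hApos k i) (hz i)).le
      have e3 : ∀ i : Fin n,
          (Real.sqrt (A k i / z i) * ε i) ^ 2 = A k i * (ε i ^ 2 / z i) := by
        intro i
        rw [mul_pow, Real.sq_sqrt (div_nonneg (hApos k i).le (hz i).le),
          div_mul_eq_mul_div, mul_div_assoc]
      simp only [e1, e2, e3] at key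
      have hwk : w k = ∑ i, A k i * ε i := by
        rw [hw_def]; simp [Matrix.mulVec, dotProduct]
      have hyk : y k = ∑ i, A k i * z i := by
        rw [hy_def]; simp [Matrix.mulVec, dotProduct]
      rw [hwk, hyk]
      exact key
    calc BF ≤ ∑ k, y k ^ (p-2) * (y k * ∑ i, A k i * (ε i ^ 2 / z i)) :=
          Finset.sum_le_sum fun k _ =>
            mul_le_mul_of_nonneg_left (step1 k) (Real.rpow_nonneg (hy k).le _)
      _ = ∑ k, ∑ i, y k ^ (p-1) * (A k i * (ε i ^ 2 / z i)) := by
          apply Finset.sum_congr rfl; intro k _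
          rw [← mul_assoc,
            show y k ^ (p-2) * y k = y k ^ (p-1) by
              rw [show p-1 = (p-2)+1 by ring, Real.rpow_add_one (hy k).ne'],
            Finset.mul_sum]
      _ = ∑ i, (∑ k, y k ^ (p-1) * A k i) * (ε i ^ 2 / z i) := by
          rw [Finset.sum_comm]
          exact Finset.sum_congr rfl fun i _ => by
            rw [Finset.sum_mul]
            exact Finset.sum_congr rfl fun k _ => by ring
      _ = BG := by
          rw [hBG_def]
          apply Finset.sum_congr rfl; intro i _
          rw [hcrit i, show z i ^ (q-2) = z i ^ (q-1) / z i by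
            rw [show q-2 = (q-1) - 1 by ring, Real.rpow_sub_one (hz i).ne']]
          field_simp
  -- eventual positivity
  have hev1 : ∀ᶠ t in nhds (0:ℝ), ∀ i, 0 < z i + t * ε i := by
    rw [eventually_all]
    intro i
    have hcont : Continuous fun t : ℝ => z i + t * ε i :=
      continuous_const.add (continuous_mul_right (ε i))
    have h0 : (0:ℝ) < z i + 0 * ε i := by simpa using hz i
    exact hcont.continuousAt.eventually (eventually_gt_nhds h0)
  have hev2 : ∀ᶠ t in nhds (0:ℝ), ∀ k, 0 < y k + t * w k := by
    rw [eventually_all]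
    intro k
    have hcont : Continuous fun t : ℝ => y k + t * w k :=
      continuous_const.add (continuous_mul_right (w k))
    have h0 : (0:ℝ) < y k + 0 * w k := by simpa using hy k
    exact hcont.continuousAt.eventually (eventually_gt_nhds h0)
  -- main derivative computation
  have h20 : ∀ k, 0 < y k + 0 * w k := fun k => by simpa using hy k
  have h10 : ∀ i, 0 < z i + 0 * ε i := fun i => by simpa using hz i
  have hP1d : HasDerivAt (fun t => ∑ k, w k * p * (y k + t * w k) ^ (p-1))
      (p * ((p-1) * BF)) 0 := by
    have h := sumP1_hasDerivAt p y w 0 h20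
    have e : ∑ k, w k * p * (w k * (p - 1) * (y k + 0 * w k) ^ (p - 1 - 1))
        = p * ((p-1) * BF) := by
      rw [hBF_def, Finset.mul_sum, Finset.mul_sum]
      exact Finset.sum_congr rfl fun k _ => by
        rw [show p - 1 - 1 = p - 2 by ring]; ring
    exact e ▸ h
  have hQ1d : HasDerivAt (fun t => ∑ i, ε i * q * (z i + t * ε i) ^ (q-1))
      (q * ((q-1) * BG)) 0 := by
    have h := sumP1_hasDerivAt q z ε 0 h10
    have e : ∑ i, ε i * q * (ε i * (q - 1) * (z i + 0 * ε i) ^ (q - 1 - 1))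
        = q * ((q-1) * BG) := by
      rw [hBG_def, Finset.mul_sum, Finset.mul_sum]
      exact Finset.sum_congr rfl fun i _ => by
        rw [show q - 1 - 1 = q - 2 by ring]; ring
    exact e ▸ h
  have main := aux_main (p := p) (q := q)
    (P := fun t => ∑ k, (y k + t * w k) ^ p)
    (Q := fun t => ∑ i, (z i + t * ε i) ^ q)
    (P₁ := fun t => ∑ k, w k * p * (y k + t * w k) ^ (p-1))
    (Q₁ := fun t => ∑ i, ε i * q * (z i + t * ε i) ^ (q-1))
    (dP := p * c) (dQ := q * c) (dP2 := p * ((p-1) * BF)) (dQ2 := q * ((q-1) * BG))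
    (hev2.mono fun t ht => Finset.sum_pos (fun k _ => Real.rpow_pos_of_pos (ht k) p) hne)
    (hev1.mono fun t ht => Finset.sum_pos (fun i _ => Real.rpow_pos_of_pos (ht i) q) hne)
    (hev2.mono fun t ht => sumP_hasDerivAt p y w t ht)
    (hev1.mono fun t ht => sumP_hasDerivAt q z ε t ht)
    (by simpa using hPsum)
    (by simpa using hQsum)
    (by
      simp only [zero_mul, add_zero]
      rw [← hac, Finset.mul_sum]
      exact Finset.sum_congr rfl fun k _ => by ring)
    (by
      simp only [zero_mul, add_zero]
      rw [hc_def, Finset.mul_sum]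
      exact Finset.sum_congr rfl fun i _ => by ring)
    hP1d hQ1d
  -- identify the function with our explicit form near 0
  have hfg : (fun t : ℝ => pnorm p (A.mulVec (z + t • ε)) / pnorm q (z + t • ε))
      =ᶠ[nhds (0:ℝ)]
      (fun t => (∑ k, (y k + t * w k) ^ p) ^ (1/p)
        * (∑ i, (z i + t * ε i) ^ q) ^ (-(1/q))) := by
    filter_upwards [hev1, hev2] with t h1 h2
    have hAv : A.mulVec (z + t • ε) = fun k => y k + t * w k := by
      funext k
      rw [Matrix.mulVec_add, Matrix.mulVec_smul, ← hy_def, ← hw_def]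
      simp
    have eP : pnorm p (A.mulVec (z + t • ε)) = (∑ k, (y k + t * w k) ^ p) ^ (1/p) := by
      rw [hAv, pnorm]
      congr 1
      exact Finset.sum_congr rfl fun k _ => by rw [abs_of_pos (h2 k)]
    have eQ : pnorm q (z + t • ε) = (∑ i, (z i + t * ε i) ^ q) ^ (1/q) := by
      rw [pnorm]
      congr 1
      apply Finset.sum_congr rfl
      intro i _
      have : (z + t • ε) i = z i + t * ε i := by simp
      rw [this, abs_of_pos (h1 i)]
    have hQt : (0:ℝ) ≤ ∑ i, (z i + t * ε i) ^ q :=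
      Finset.sum_nonneg fun i _ => (Real.rpow_pos_of_pos (h1 i) q).le
    rw [eP, eQ, Real.rpow_neg hQt, div_eq_mul_inv]
  rw [iteratedDeriv_succ, iteratedDeriv_one, (hfg.deriv).deriv_eq, main]
  have hVeq : p * ((p-1) * BF) * (1/p) + (p*c)^2 * (1/p) * (1/p - 1)
      - 2 * (p*c) * (q*c) * (1/p) * (1/q) - q * ((q-1) * BG) * (1/q)
      + (q*c)^2 * (1/q) * (1/q + 1)
      = (p-1)*(BF - c^2) - (q-1)*(BG - c^2) := by
    field_simp
    ring
  rw [hVeq]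
  nlinarith [mul_nonneg (by linarith : (0:ℝ) ≤ p - 1) (by linarith : (0:ℝ) ≤ BG - BF),
    mul_nonneg (by linarith : (0:ℝ) ≤ q - p) (by linarith : (0:ℝ) ≤ BG - c^2)]
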